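/- A squarefree positive integer α is a congruent number if and only if the equation α·y² = x³ - x has a rational solution (x, y) with y ≠ 0. -/

import Mathlib

lemma no_rat_sq_two (r : ℚ) : r ^ 2 ≠ 2 := by
  intro h
  have h1 : ((|r| : ℚ) : ℝ) ^ 2 = 2 := by push_cast; rw [sq_abs]; exact_mod_cast h
  have h2 : ((|r| : ℚ) : ℝ) = Real.sqrt 2 := by
    rw [← h1, Real.sqrt_sq (by positivity)]
  exact irrational_sqrt_two ⟨|r|, h2⟩

/-- Proposition 6: a squarefree positive integer `α` is congruent iff the equation
`α y² = x³ - x` has a rational solution with `y ≠ 0`. -/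
theorem congruent_iff_point_on_curve (α : ℤ) (hsf : Squarefree α) (hpos : 0 < α) :
    (∃ a b c : ℚ, a ^ 2 + b ^ 2 = c ^ 2 ∧ a * b = 2 * (α : ℚ)) ↔
    (∃ x y : ℚ, y ≠ 0 ∧ (α : ℚ) * y ^ 2 = x ^ 3 - x) := by
  have hα : (α : ℚ) ≠ 0 := by exact_mod_cast hpos.ne'
  have hαQ : (0:ℚ) < (α : ℚ) := by exact_mod_cast hpos
  constructor
  · rintro ⟨a, b, c, hc, hab⟩
    have ha : a ≠ 0 := by
      rintro rfl; simp at hab; nlinarith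
    have hcne : c ≠ 0 := by
      rintro rfl
      have : a = 0 := by nlinarith [sq_nonneg a, sq_nonneg b]
      exact ha this
    have hab2 : a ^ 2 ≠ b ^ 2 := by
      intro h
      have : (a - b) * (a + b) = 0 := by ring_nf; linarith [h]
      rcases mul_eq_zero.mp this with h1 | h1
      · have hba : b = a := by linarith
        have : (c / a) ^ 2 = 2 := by
          rw [div_pow]
          rw [div_eq_iff (by positivity)]
          rw [hba] at hc; linarith
        exact no_rat_sq_two _ this
      · have hba : b = -a := by linarith
        rw [hba] at hab
        nlinarith [sq_nonneg a]
    refine ⟨c ^ 2 / (4 * α), c * (a ^ 2 - b ^ 2) / (8 * α ^ 2), ?_, ?_⟩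
    · exact div_ne_zero (mul_ne_zero hcne (sub_ne_zero.mpr hab2)) (by positivity)
    · field_simp
      linear_combination (64 * (a ^ 2 + b ^ 2 + c ^ 2)) * hc -
        (256 * (a * b + 2 * (α:ℚ))) * hab
  · rintro ⟨x, y, hy, heq⟩
    refine ⟨(x ^ 2 - 1) / y, 2 * x / y, (x ^ 2 + 1) / y, ?_, ?_⟩
    · field_simp; ring
    · field_simp
      linear_combination -1 * heq
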